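/- Let G be a prior supported on [0,h] and Y ~ f_G the Poisson mixture. Then for any integer K > 2h, P[Y ≥ K] ≤ 2 e^{-h} h^K / K!. -/

import Mathlib

open MeasureTheory Real

/-- Poisson density with mean `θ` at point `y`. -/
noncomputable def poissonPdf (θ : ℝ) (y : ℕ) : ℝ :=
  Real.exp (-θ) * θ ^ y / (Nat.factorial y)

/-- Poisson mixture density `f_G`. -/
noncomputable def mixturePdf (G : Measure ℝ) (y : ℕ) : ℝ :=
  ∫ θ, poissonPdf θ y ∂G

lemma poissonPdf_nonneg {θ : ℝ} (hθ : 0 ≤ θ) (y : ℕ) : 0 ≤ poissonPdf θ y := by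
  unfold poissonPdf; positivity

lemma poissonPdf_mono {θ h : ℝ} (hθ0 : 0 ≤ θ) (hθh : θ ≤ h) (hh : 0 < h)
    {y : ℕ} (hy : h ≤ (y : ℝ)) : poissonPdf θ y ≤ poissonPdf h y := by
  have h1 : θ / h ≤ Real.exp (θ / h - 1) := by
    have := Real.add_one_le_exp (θ / h - 1); linarith
  have h2 : (θ / h) ^ y ≤ Real.exp (θ / h - 1) ^ y :=
    pow_le_pow_left₀ (by positivity) h1 y
  have h3 : Real.exp (θ / h - 1) ^ y = Real.exp ((y : ℝ) * (θ / h - 1)) := by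
    rw [← Real.exp_nat_mul]
  have hc : θ / h - 1 ≤ 0 := by
    have : θ / h ≤ 1 := (div_le_one hh).mpr hθh
    linarith
  have h4 : (y : ℝ) * (θ / h - 1) ≤ θ - h := by
    have := mul_le_mul_of_nonpos_right hy hc
    have heq : h * (θ / h - 1) = θ - h := by field_simp
    linarith
  have h5 : θ ^ y ≤ Real.exp (θ - h) * h ^ y := by
    have hle : (θ / h) ^ y ≤ Real.exp (θ - h) := by
      calc (θ / h) ^ y ≤ Real.exp (θ / h - 1) ^ y := h2
        _ = Real.exp ((y : ℝ) * (θ / h - 1)) := h3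
        _ ≤ Real.exp (θ - h) := Real.exp_le_exp.mpr h4
    have hpow : (θ / h) ^ y * h ^ y = θ ^ y := by
      rw [div_pow]; field_simp
    nlinarith [pow_pos hh y]
  have hnum : Real.exp (-θ) * θ ^ y ≤ Real.exp (-h) * h ^ y := by
    calc Real.exp (-θ) * θ ^ y ≤ Real.exp (-θ) * (Real.exp (θ - h) * h ^ y) :=
          mul_le_mul_of_nonneg_left h5 (Real.exp_pos _).le
      _ = Real.exp (-h) * h ^ y := by
          rw [← mul_assoc, ← Real.exp_add]; ring_nf
  unfold poissonPdf
  have : (0:ℝ) < (Nat.factorial y : ℝ) := by positivity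
  gcongr

lemma mixturePdf_le {h : ℝ} (hh : 0 < h) (G : Measure ℝ) [IsProbabilityMeasure G]
    (hsupp : ∀ᵐ θ ∂G, θ ∈ Set.Icc 0 h) {y : ℕ} (hy : h ≤ (y : ℝ)) :
    mixturePdf G y ≤ poissonPdf h y := by
  have hb : ∀ᵐ θ ∂G, ‖poissonPdf θ y‖ ≤ poissonPdf h y := by
    filter_upwards [hsupp] with θ hθ
    rw [Real.norm_eq_abs, abs_of_nonneg (poissonPdf_nonneg hθ.1 y)]
    exact poissonPdf_mono hθ.1 hθ.2 hh hy
  have hnorm := norm_integral_le_of_norm_le_const hb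
  simp only [measure_univ, probReal_univ, ENNReal.toReal_one, mul_one] at hnorm
  calc mixturePdf G y ≤ ‖∫ θ, poissonPdf θ y ∂G‖ := le_abs_self _
    _ ≤ poissonPdf h y := hnorm

lemma mixturePdf_nonneg {h : ℝ} (G : Measure ℝ)
    (hsupp : ∀ᵐ θ ∂G, θ ∈ Set.Icc 0 h) (y : ℕ) : 0 ≤ mixturePdf G y := by
  apply integral_nonneg_of_ae
  filter_upwards [hsupp] with θ hθ
  exact poissonPdf_nonneg hθ.1 y

lemma pois_geo {h : ℝ} (hh : 0 < h) {K : ℕ} (hK : 2 * h < K) (n : ℕ) :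
    poissonPdf h (K + n) ≤ poissonPdf h K * (1 / 2) ^ n := by
  induction n with
  | zero => simp
  | succ n ih =>
    have hKn : (0:ℝ) < (K : ℝ) + n + 1 := by positivity
    have hfac : (0:ℝ) < (Nat.factorial (K + n) : ℝ) := by positivity
    have heq : poissonPdf h (K + (n + 1)) = poissonPdf h (K + n) * (h / ((K : ℝ) + n + 1)) := by
      have : K + (n + 1) = (K + n) + 1 := by omega
      rw [this]
      unfold poissonPdf
      rw [Nat.factorial_succ, pow_succ]
      push_cast
      field_simp
    have hr : h / ((K : ℝ) + n + 1) ≤ 1 / 2 := by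
      rw [div_le_div_iff₀ hKn two_pos]
      have : (0:ℝ) ≤ (n : ℝ) := Nat.cast_nonneg n
      linarith
    have hnn : 0 ≤ poissonPdf h (K + n) := poissonPdf_nonneg hh.le _
    have hrnn : 0 ≤ h / ((K : ℝ) + n + 1) := by positivity
    calc poissonPdf h (K + (n + 1)) = poissonPdf h (K + n) * (h / ((K : ℝ) + n + 1)) := heq
      _ ≤ (poissonPdf h K * (1 / 2) ^ n) * (1 / 2) := by
          apply mul_le_mul ih hr hrnn
          exact mul_nonneg (poissonPdf_nonneg hh.le K) (by positivity)
      _ = poissonPdf h K * (1 / 2) ^ (n + 1) := by ring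

/-- if the prior `G` is supported on `[0,h]` and `Y ~ f_G`, then for any
integer `K > 2h`, `P[Y ≥ K] ≤ 2 e^{-h} h^K / K!`. -/
theorem tail_poisson_mixture_bounded (h : ℝ) (hh : 0 < h)
    (G : Measure ℝ) [IsProbabilityMeasure G] (hsupp : ∀ᵐ θ ∂G, θ ∈ Set.Icc 0 h)
    (K : ℕ) (hK : 2 * h < K) :
    ∑' y : {y : ℕ // K ≤ y}, mixturePdf G y
      ≤ 2 * Real.exp (-h) * h ^ K / (Nat.factorial K) := by
  set C := poissonPdf h K with hC
  have hCnn : 0 ≤ C := poissonPdf_nonneg hh.le K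
  let e : ℕ ≃ {y : ℕ // K ≤ y} :=
    { toFun := fun n => ⟨K + n, Nat.le_add_right K n⟩
      invFun := fun y => y.1 - K
      left_inv := fun n => by simp
      right_inv := fun y => by
        apply Subtype.ext
        have := y.2
        simp only
        omega }
  rw [← Equiv.tsum_eq e]
  have hbound : ∀ n : ℕ, mixturePdf G (K + n) ≤ C * (1 / 2) ^ n := by
    intro n
    have hy : h ≤ ((K + n : ℕ) : ℝ) := by
      push_cast
      have : (0:ℝ) ≤ (n : ℝ) := Nat.cast_nonneg n
      linarith
    exact (mixturePdf_le hh G hsupp hy).trans (pois_geo hh hK n)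
  have hgsum : Summable (fun n : ℕ => C * (1 / 2) ^ n) :=
    (summable_geometric_of_lt_one (by norm_num) (by norm_num)).mul_left C
  have hfsum : Summable (fun n : ℕ => mixturePdf G (K + n)) :=
    Summable.of_nonneg_of_le (fun n => mixturePdf_nonneg G hsupp _) hbound hgsum
  have htsum : ∑' n : ℕ, mixturePdf G (K + n) ≤ ∑' n : ℕ, C * (1 / 2) ^ n :=
    Summable.tsum_le_tsum hbound hfsum hgsum
  have hgeo : ∑' n : ℕ, C * (1 / 2) ^ n = C * 2 := by
    rw [tsum_mul_left, tsum_geometric_of_lt_one (by norm_num) (by norm_num)]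
    norm_num
  calc ∑' n : ℕ, mixturePdf G (e n) = ∑' n : ℕ, mixturePdf G (K + n) := rfl
    _ ≤ C * 2 := by rw [← hgeo]; exact htsum
    _ = 2 * Real.exp (-h) * h ^ K / (Nat.factorial K) := by
        rw [hC]; unfold poissonPdf; ring
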